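/- L^p-continuity of the p-Laplace flux in the singular range: let p ∈ (1, 2] with conjugate exponent p' = p/(p−1). There exists a constant C > 0 depending only on p such that for every measure space (Ω, μ) and all measurable f, g : Ω → ℝ^d with ‖f − g‖_{L^p(μ)} < ∞, one has ‖A∘f − A∘g‖_{L^{p'}(μ)} ≤ C ‖f − g‖_{L^p(μ)}^{p−1}. -/
import Mathlib


open MeasureTheory

/-- The p-Laplace flux `A(τ) = |τ|^{p-2} τ` (with `A(0) = 0`). -/
noncomputable def pFlux (d : ℕ) (p : ℝ) (τ : EuclideanSpace ℝ (Fin d)) :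
    EuclideanSpace ℝ (Fin d) := ‖τ‖ ^ (p - 2) • τ

/-- The `L^q` norm `(∫_Ω |h|^q dμ)^{1/q}` of a vector-valued function, in `[0, ∞]`. -/
noncomputable def vecLpNorm {Ω : Type*} [MeasurableSpace Ω] (μ : Measure Ω) {d : ℕ}
    (h : Ω → EuclideanSpace ℝ (Fin d)) (q : ℝ) : ENNReal :=
  (∫⁻ ω, ENNReal.ofReal (‖h ω‖ ^ q) ∂μ) ^ (1 / q)

/-- `L^p`-continuity of the p-Laplace flux in the singular range
`p ∈ (1, 2]`, `p' = p/(p−1)`: there is `C > 0` depending only on `p` such that for every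
measure space and all measurable `f, g : Ω → ℝ^d` with `‖f − g‖_{L^p} < ∞`,
`‖A∘f − A∘g‖_{L^{p'}} ≤ C ‖f − g‖_{L^p}^{p−1}`. -/
lemma pFlux_holder_aux {d : ℕ} {p : ℝ} (hp1 : 1 < p) (hp2 : p ≤ 2)
    (a b : EuclideanSpace ℝ (Fin d)) (hba : ‖b‖ ≤ ‖a‖) :
    ‖pFlux d p a - pFlux d p b‖ ≤ 3 * ‖a - b‖ ^ (p - 1) := by
  set t := ‖a‖ with ht
  set s := ‖b‖ with hs
  set r := ‖a - b‖ with hr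
  have hs0 : 0 ≤ s := norm_nonneg _
  have hr0 : 0 ≤ r := norm_nonneg _
  rcases eq_or_lt_of_le hr0 with hre | hrpos
  · have hab : a = b := by
      have := norm_sub_eq_zero_iff.mp hre.symm; exact this
    rw [hab]
    simp only [sub_self, norm_zero]
    positivity
  · have htpos : 0 < t := by
      by_contra h
      push_neg at h
      have ht0 : t = 0 := le_antisymm h (norm_nonneg _)
      have ha : a = 0 := norm_eq_zero.mp ht0
      have hb : b = 0 := norm_eq_zero.mp (le_antisymm (ht0 ▸ hba) hs0)
      have : r = 0 := by rw [hr, ha, hb]; simp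
      linarith
    have hdecomp : pFlux d p a - pFlux d p b
        = t ^ (p - 2) • (a - b) + (t ^ (p - 2) - s ^ (p - 2)) • b := by
      simp only [pFlux, smul_sub, sub_smul, ← ht, ← hs]
      abel
    -- term 1 bound
    have hterm1 : t ^ (p - 2) * r ≤ 2 * r ^ (p - 1) := by
      have hr2t : r ≤ 2 * t := by
        calc r ≤ ‖a‖ + ‖b‖ := norm_sub_le a b
          _ ≤ t + t := by rw [← ht]; linarith
          _ = 2 * t := by ring
      have h1 : t ^ (p - 2) ≤ (r / 2) ^ (p - 2) :=
        Real.rpow_le_rpow_of_nonpos (by linarith) (by linarith) (by linarith)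
      have h2 : (r / 2) ^ (p - 2) = 2 ^ (2 - p) * r ^ (p - 2) := by
        rw [Real.div_rpow hr0 (by norm_num : (0:ℝ) ≤ 2), div_eq_mul_inv,
          ← Real.rpow_neg (by norm_num : (0:ℝ) ≤ 2)]
        ring_nf
      have h3 : r ^ (p - 2) * r = r ^ (p - 1) := by
        rw [← Real.rpow_add_one (ne_of_gt hrpos)]
        ring_nf
      have h4 : (2:ℝ) ^ (2 - p) ≤ 2 := by
        calc (2:ℝ) ^ (2 - p) ≤ 2 ^ (1:ℝ) :=
              Real.rpow_le_rpow_of_exponent_le one_le_two (by linarith)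
          _ = 2 := Real.rpow_one 2
      calc t ^ (p - 2) * r ≤ (r / 2) ^ (p - 2) * r := by
            exact mul_le_mul_of_nonneg_right h1 hr0
        _ = 2 ^ (2 - p) * (r ^ (p - 2) * r) := by rw [h2]; ring
        _ = 2 ^ (2 - p) * r ^ (p - 1) := by rw [h3]
        _ ≤ 2 * r ^ (p - 1) := mul_le_mul_of_nonneg_right h4 (by positivity)
    -- term 2 bound
    have hterm2 : |t ^ (p - 2) - s ^ (p - 2)| * s ≤ r ^ (p - 1) := by
      rcases eq_or_lt_of_le hs0 with hse | hspos
      · rw [← hse, mul_zero]; positivity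
      · have hts : t ^ (p - 2) ≤ s ^ (p - 2) :=
          Real.rpow_le_rpow_of_nonpos hspos hba (by linarith)
        rw [abs_of_nonpos (by linarith), neg_sub]
        have hkey : (s ^ (p - 2) - t ^ (p - 2)) * s ≤ (t - s) ^ (p - 1) := by
          have hsp : s ^ (p - 2) * s = s ^ (p - 1) := by
            rw [← Real.rpow_add_one (ne_of_gt hspos)]; ring_nf
          have htp : t ^ (p - 2) * t = t ^ (p - 1) := by
            rw [← Real.rpow_add_one (ne_of_gt htpos)]; ring_nf
          have hst : s ^ (p - 1) ≤ t ^ (p - 1) :=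
            Real.rpow_le_rpow hs0 hba (by linarith)
          have hmid : t ^ (p - 2) * (t - s) ≤ (t - s) ^ (p - 1) := by
            rcases eq_or_lt_of_le hba with heq | hlt
            · rw [heq]; simp; positivity
            · have hd0 : 0 < t - s := by linarith
              have hdt : t - s ≤ t := by linarith
              have : t ^ (p - 2) ≤ (t - s) ^ (p - 2) :=
                Real.rpow_le_rpow_of_nonpos hd0 hdt (by linarith)
              calc t ^ (p - 2) * (t - s) ≤ (t - s) ^ (p - 2) * (t - s) :=
                    mul_le_mul_of_nonneg_right this (le_of_lt hd0)
                _ = (t - s) ^ (p - 1) := by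
                    rw [← Real.rpow_add_one (ne_of_gt hd0)]; ring_nf
          calc (s ^ (p - 2) - t ^ (p - 2)) * s
              = s ^ (p - 1) - t ^ (p - 1) + t ^ (p - 2) * (t - s) := by
                rw [← hsp, ← htp]; ring
            _ ≤ 0 + (t - s) ^ (p - 1) := by
                apply add_le_add (by linarith) hmid
            _ = (t - s) ^ (p - 1) := by ring
        have hd_le_r : t - s ≤ r := by
          have := norm_sub_norm_le a b
          rw [← ht, ← hs, ← hr] at this; exact this
        calc (s ^ (p - 2) - t ^ (p - 2)) * s ≤ (t - s) ^ (p - 1) := hkey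
          _ ≤ r ^ (p - 1) := Real.rpow_le_rpow (by linarith) hd_le_r (by linarith)
    calc ‖pFlux d p a - pFlux d p b‖
        ≤ ‖t ^ (p - 2) • (a - b)‖ + ‖(t ^ (p - 2) - s ^ (p - 2)) • b‖ := by
          rw [hdecomp]; exact norm_add_le _ _
      _ = |t ^ (p - 2)| * r + |t ^ (p - 2) - s ^ (p - 2)| * s := by
          rw [norm_smul, norm_smul, Real.norm_eq_abs, Real.norm_eq_abs, ← hr, ← hs]
      _ ≤ 2 * r ^ (p - 1) + r ^ (p - 1) := by
          apply add_le_add _ hterm2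
          rw [abs_of_nonneg (Real.rpow_nonneg (norm_nonneg a) _)]
          exact hterm1
      _ = 3 * r ^ (p - 1) := by ring

lemma pFlux_holder {d : ℕ} {p : ℝ} (hp1 : 1 < p) (hp2 : p ≤ 2)
    (a b : EuclideanSpace ℝ (Fin d)) :
    ‖pFlux d p a - pFlux d p b‖ ≤ 3 * ‖a - b‖ ^ (p - 1) := by
  rcases le_total ‖b‖ ‖a‖ with h | h
  · exact pFlux_holder_aux hp1 hp2 a b h
  · rw [norm_sub_rev, norm_sub_rev a b]
    exact pFlux_holder_aux hp1 hp2 b a h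

theorem stmt_12.{u} (d : ℕ) (hd : 1 ≤ d) (p p' : ℝ) (hp1 : 1 < p) (hp2 : p ≤ 2)
    (hp' : p' = p / (p - 1)) :
    ∃ C > (0 : ℝ), ∀ (Ω : Type u) [MeasurableSpace Ω] (μ : Measure Ω)
      (f g : Ω → EuclideanSpace ℝ (Fin d)), Measurable f → Measurable g →
      vecLpNorm μ (fun ω => f ω - g ω) p ≠ ⊤ →
      vecLpNorm μ (fun ω => pFlux d p (f ω) - pFlux d p (g ω)) p' ≤
        ENNReal.ofReal C * vecLpNorm μ (fun ω => f ω - g ω) p ^ (p - 1) := by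
  have hp1' : (0:ℝ) < p - 1 := by linarith
  have hp'pos : 0 < p' := by rw [hp']; positivity
  have hpp' : (p - 1) * p' = p := by
    rw [hp']; field_simp
  have hinv : (1 / p) * (p - 1) = 1 / p' := by
    rw [hp']; field_simp
  refine ⟨3, by norm_num, ?_⟩
  intro Ω _ μ f g hf hg hfin
  unfold vecLpNorm
  set I : ENNReal := ∫⁻ ω, ENNReal.ofReal (‖f ω - g ω‖ ^ p) ∂μ with hI
  have hptwise : ∀ ω, ENNReal.ofReal (‖pFlux d p (f ω) - pFlux d p (g ω)‖ ^ p')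
      ≤ ENNReal.ofReal ((3:ℝ) ^ p') * ENNReal.ofReal (‖f ω - g ω‖ ^ p) := by
    intro ω
    rw [← ENNReal.ofReal_mul (by positivity)]
    apply ENNReal.ofReal_le_ofReal
    calc ‖pFlux d p (f ω) - pFlux d p (g ω)‖ ^ p'
        ≤ (3 * ‖f ω - g ω‖ ^ (p - 1)) ^ p' :=
          Real.rpow_le_rpow (norm_nonneg _) (pFlux_holder hp1 hp2 _ _) hp'pos.le
      _ = (3:ℝ) ^ p' * (‖f ω - g ω‖ ^ (p - 1)) ^ p' :=
          Real.mul_rpow (by norm_num) (by positivity)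
      _ = (3:ℝ) ^ p' * ‖f ω - g ω‖ ^ p := by
          rw [← Real.rpow_mul (norm_nonneg _), hpp']
  calc (∫⁻ ω, ENNReal.ofReal (‖pFlux d p (f ω) - pFlux d p (g ω)‖ ^ p') ∂μ) ^ (1 / p')
      ≤ (∫⁻ ω, ENNReal.ofReal ((3:ℝ) ^ p') * ENNReal.ofReal (‖f ω - g ω‖ ^ p) ∂μ) ^ (1 / p') :=
        ENNReal.rpow_le_rpow (lintegral_mono hptwise) (by positivity)
    _ = (ENNReal.ofReal ((3:ℝ) ^ p') * I) ^ (1 / p') := by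
        rw [lintegral_const_mul' _ _ ENNReal.ofReal_ne_top]
    _ = ENNReal.ofReal ((3:ℝ) ^ p') ^ (1 / p') * I ^ (1 / p') :=
        ENNReal.mul_rpow_of_nonneg _ _ (by positivity)
    _ = ENNReal.ofReal 3 * (I ^ (1 / p)) ^ (p - 1) := by
        rw [← ENNReal.ofReal_rpow_of_pos (by norm_num : (0:ℝ) < 3),
          ← ENNReal.rpow_mul, ← ENNReal.rpow_mul,
          mul_one_div, div_self (ne_of_gt hp'pos), ENNReal.rpow_one, hinv]
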